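/- For the biased estimator x̂ = V_K (Ψ + βI)^{-1} (CV_K)^⊤ (Cx + n) of a K-bandlimited signal x = V_K x̃_K, with Ψ = U diag(σ_i) U^⊤ and noise n of mean zero and covariance ω² I, the mean squared error decomposes as E‖x̂ − x‖² = ∑_{i=1}^K (1 + σ_i/β)^{-2} (u_i^⊤ x̃_K)² + ω² ∑_{i=1}^K σ_i/(σ_i + β)², where u_i are the columns of U. -/

import Mathlib

open Matrix MeasureTheory

/-- MSE of the biased (ridge) estimator `x̂ = V (Ψ + βI)⁻¹ (CV)ᵀ (Cx + n)` of the
`K`-bandlimited signal `x = V xt`, with `Ψ = (CV)ᵀCV = U diag(σ) Uᵀ` and noise `n` of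
zero mean and covariance `ω² I`:
`E‖x̂ - x‖² = ∑ᵢ (1 + σᵢ/β)⁻² (uᵢᵀ xt)² + ω² ∑ᵢ σᵢ/(σᵢ + β)²`. -/
theorem stmt14 (N M K : ℕ) (V : Matrix (Fin N) (Fin K) ℝ) (hV : Vᵀ * V = 1)
    (f : Fin M → Fin N) (hf : Function.Injective f)
    (C : Matrix (Fin M) (Fin N) ℝ)
    (hC : ∀ i j, C i j = if f i = j then 1 else 0)
    (U : Matrix (Fin K) (Fin K) ℝ) (σ : Fin K → ℝ) (hU : Uᵀ * U = 1)
    (hσ : ∀ i, 0 ≤ σ i)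
    (hΨ : (C * V)ᵀ * (C * V) = U * Matrix.diagonal σ * Uᵀ)
    (β : ℝ) (hβ : 0 < β)
    (xt : Fin K → ℝ)
    (Ω : Type*) [MeasurableSpace Ω] (P : Measure Ω) [IsProbabilityMeasure P]
    (n : Ω → Fin M → ℝ) (ω2 : ℝ)
    (hmean : ∀ i, ∫ a, n a i ∂P = 0)
    (hcov : ∀ i j, ∫ a, n a i * n a j ∂P = if i = j then ω2 else 0)
    (hint1 : ∀ i, Integrable (fun a => n a i) P)
    (hint2 : ∀ i j, Integrable (fun a => n a i * n a j) P) :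
    ∫ a, (∑ i, ((V *ᵥ (((C * V)ᵀ * (C * V) + β • 1)⁻¹ *ᵥ
        ((C * V)ᵀ *ᵥ (C *ᵥ (V *ᵥ xt) + n a)))) i - (V *ᵥ xt) i) ^ 2) ∂P
      = (∑ i, ((1 + σ i / β) ^ 2)⁻¹ * ((Uᵀ *ᵥ xt) i) ^ 2)
        + ω2 * ∑ i, σ i / (σ i + β) ^ 2 := by
  have hβ0 : β ≠ 0 := ne_of_gt hβ
  have hσβ : ∀ i, σ i + β ≠ 0 := fun i => ne_of_gt (by have := hσ i; linarith)
  set A := C * V with hA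
  have hUU : U * Uᵀ = 1 := mul_eq_one_comm.mp hU
  -- conjugation helpers
  have hconj : ∀ g h : Fin K → ℝ,
      (U * Matrix.diagonal g * Uᵀ) * (U * Matrix.diagonal h * Uᵀ)
        = U * Matrix.diagonal (fun i => g i * h i) * Uᵀ := by
    intro g h
    have : Matrix.diagonal g * (Uᵀ * (U * (Matrix.diagonal h * Uᵀ)))
        = Matrix.diagonal (fun i => g i * h i) * Uᵀ := by
      rw [← Matrix.mul_assoc Uᵀ U, hU, Matrix.one_mul, ← Matrix.mul_assoc,
        Matrix.diagonal_mul_diagonal]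
    simp only [Matrix.mul_assoc, this]
  set s : Fin K → ℝ := fun i => (σ i + β)⁻¹ with hs
  set B : Matrix (Fin K) (Fin K) ℝ := U * Matrix.diagonal s * Uᵀ with hBdef
  have hsmul : (β • (1 : Matrix (Fin K) (Fin K) ℝ))
      = U * Matrix.diagonal (fun _ => β) * Uᵀ := by
    have h1 : Matrix.diagonal (fun _ : Fin K => β) = β • (1 : Matrix (Fin K) (Fin K) ℝ) := by
      ext i j
      by_cases h : i = j <;> simp [Matrix.one_apply, Matrix.diagonal_apply, h]
    rw [h1, Matrix.mul_smul, Matrix.mul_one, Matrix.smul_mul, hUU]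
  have hBinv : (Aᵀ * A + β • 1)⁻¹ = B := by
    apply Matrix.inv_eq_right_inv
    rw [hΨ, hsmul, hBdef]
    have hadd : U * Matrix.diagonal σ * Uᵀ + U * Matrix.diagonal (fun _ => β) * Uᵀ
        = U * Matrix.diagonal (fun i => σ i + β) * Uᵀ := by
      rw [← Matrix.add_mul, ← Matrix.mul_add, Matrix.diagonal_add]
    rw [hadd, hconj]
    have : (fun i => (σ i + β) * s i) = fun _ => (1 : ℝ) := by
      funext i; simp [hs, mul_inv_cancel₀ (hσβ i)]
    rw [this, Matrix.diagonal_one, Matrix.mul_one, hUU]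
  -- norm preservation
  have hnorm : ∀ (W : Matrix (Fin N) (Fin K) ℝ), Wᵀ * W = 1 → ∀ z : Fin K → ℝ,
      (∑ i, ((W *ᵥ z) i) ^ 2) = ∑ i, (z i) ^ 2 := by
    intro W hW z
    have h1 : (W *ᵥ z) ⬝ᵥ (W *ᵥ z) = z ⬝ᵥ z := by
      rw [Matrix.dotProduct_mulVec]
      have h2 : W *ᵥ z = z ᵥ* Wᵀ := by
        rw [← Matrix.transpose_transpose W, Matrix.mulVec_transpose, Matrix.transpose_transpose]
      rw [h2, Matrix.vecMul_vecMul, hW, Matrix.vecMul_one]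
    simpa [dotProduct, pow_two] using h1
  have hnormK : ∀ (W : Matrix (Fin K) (Fin K) ℝ), Wᵀ * W = 1 → ∀ z : Fin K → ℝ,
      (∑ i, ((W *ᵥ z) i) ^ 2) = ∑ i, (z i) ^ 2 := by
    intro W hW z
    have h1 : (W *ᵥ z) ⬝ᵥ (W *ᵥ z) = z ⬝ᵥ z := by
      rw [Matrix.dotProduct_mulVec]
      have h2 : W *ᵥ z = z ᵥ* Wᵀ := by
        rw [← Matrix.transpose_transpose W, Matrix.mulVec_transpose, Matrix.transpose_transpose]
      rw [h2, Matrix.vecMul_vecMul, hW, Matrix.vecMul_one]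
    simpa [dotProduct, pow_two] using h1
  set Mm : Matrix (Fin K) (Fin M) ℝ := B * Aᵀ with hMm
  set b : Fin K → ℝ := (Mm * A) *ᵥ xt - xt with hb
  -- rewrite integrand
  have hinteg : ∀ a, (∑ i, ((V *ᵥ ((Aᵀ * A + β • 1)⁻¹ *ᵥ
        (Aᵀ *ᵥ (C *ᵥ (V *ᵥ xt) + n a)))) i - (V *ᵥ xt) i) ^ 2)
      = ∑ i, (b i + (Mm *ᵥ n a) i) ^ 2 := by
    intro a
    rw [hBinv]
    have hz : B *ᵥ (Aᵀ *ᵥ (C *ᵥ (V *ᵥ xt) + n a)) - xt = b + Mm *ᵥ n a := by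
      rw [Matrix.mulVec_mulVec xt C V, ← hA, Matrix.mulVec_add, Matrix.mulVec_add]
      simp only [Matrix.mulVec_mulVec, hb, hMm, Matrix.mul_assoc]
      abel
    calc (∑ i, ((V *ᵥ (B *ᵥ (Aᵀ *ᵥ (C *ᵥ (V *ᵥ xt) + n a)))) i - (V *ᵥ xt) i) ^ 2)
        = ∑ i, ((V *ᵥ (B *ᵥ (Aᵀ *ᵥ (C *ᵥ (V *ᵥ xt) + n a)) - xt)) i) ^ 2 := by
          simp [Matrix.mulVec_sub]
      _ = ∑ i, ((B *ᵥ (Aᵀ *ᵥ (C *ᵥ (V *ᵥ xt) + n a)) - xt) i) ^ 2 := hnorm V hV _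
      _ = ∑ i, (b i + (Mm *ᵥ n a) i) ^ 2 := by rw [hz]; simp

  -- expansion of the square
  set c : Fin M → ℝ := fun j => ∑ i, 2 * b i * Mm i j with hc
  set Q : Fin M → Fin M → ℝ := fun j k => ∑ i, Mm i j * Mm i k with hQ
  have expand : ∀ w : Fin M → ℝ, (∑ i, (b i + (Mm *ᵥ w) i) ^ 2)
      = (∑ i, (b i) ^ 2) + ((∑ j, c j * w j) + ∑ j, ∑ k, Q j k * (w j * w k)) := by
    intro w
    have e1 : (∑ i, 2 * b i * ∑ j, Mm i j * w j) = ∑ j, c j * w j := by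
      calc (∑ i, 2 * b i * ∑ j, Mm i j * w j)
          = ∑ i, ∑ j, 2 * b i * Mm i j * w j := by
            refine Finset.sum_congr rfl fun i _ => ?_
            rw [Finset.mul_sum]
            exact Finset.sum_congr rfl fun j _ => by ring
        _ = ∑ j, ∑ i, 2 * b i * Mm i j * w j := Finset.sum_comm
        _ = ∑ j, c j * w j := by
            refine Finset.sum_congr rfl fun j _ => ?_
            rw [hc, Finset.sum_mul]
    have e2 : (∑ i, (∑ j, Mm i j * w j) ^ 2) = ∑ j, ∑ k, Q j k * (w j * w k) := by
      calc (∑ i, (∑ j, Mm i j * w j) ^ 2)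
          = ∑ i, ∑ j, ∑ k, Mm i j * Mm i k * (w j * w k) := by
            refine Finset.sum_congr rfl fun i _ => ?_
            rw [pow_two, Finset.sum_mul_sum]
            exact Finset.sum_congr rfl fun j _ => Finset.sum_congr rfl fun k _ => by ring
        _ = ∑ j, ∑ i, ∑ k, Mm i j * Mm i k * (w j * w k) := Finset.sum_comm
        _ = ∑ j, ∑ k, ∑ i, Mm i j * Mm i k * (w j * w k) := by
            exact Finset.sum_congr rfl fun j _ => Finset.sum_comm
        _ = ∑ j, ∑ k, Q j k * (w j * w k) := by
            refine Finset.sum_congr rfl fun j _ => Finset.sum_congr rfl fun k _ => ?_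
            rw [hQ, Finset.sum_mul]
    have e0 : ∀ i, (b i + (Mm *ᵥ w) i) ^ 2
        = b i ^ 2 + 2 * b i * (Mm *ᵥ w) i + ((Mm *ᵥ w) i) ^ 2 := fun i => by ring
    simp only [e0]
    simp only [Matrix.mulVec, dotProduct]
    rw [Finset.sum_add_distrib, Finset.sum_add_distrib, add_assoc, e1, e2]
  -- integration
  have hintlin : ∀ j, Integrable (fun a => c j * n a j) P := fun j => (hint1 j).const_mul _
  have hintquad : ∀ j k, Integrable (fun a => Q j k * (n a j * n a k)) P :=
    fun j k => (hint2 j k).const_mul _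
  have hsum2 : ∀ j, Integrable (fun a => ∑ k, Q j k * (n a j * n a k)) P :=
    fun j => integrable_finset_sum _ fun k _ => hintquad j k
  have Ilin : (∫ a, ∑ j, c j * n a j ∂P) = 0 := by
    rw [integral_finset_sum _ fun j _ => hintlin j]
    simp [integral_const_mul, hmean]
  have Iquad : (∫ a, ∑ j, ∑ k, Q j k * (n a j * n a k) ∂P) = ω2 * ∑ j, Q j j := by
    rw [integral_finset_sum _ fun j _ => hsum2 j]
    have h3 : ∀ j, (∫ a, ∑ k, Q j k * (n a j * n a k) ∂P) = Q j j * ω2 := by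
      intro j
      rw [integral_finset_sum _ fun k _ => hintquad j k]
      simp only [integral_const_mul, hcov]
      simp [Finset.sum_ite_eq, mul_ite, mul_zero]
    simp only [h3]
    rw [Finset.mul_sum]
    exact Finset.sum_congr rfl fun j _ => mul_comm _ _
  have hI : ∫ a, (∑ i, (b i + (Mm *ᵥ n a) i) ^ 2) ∂P
      = (∑ i, (b i) ^ 2) + ω2 * ∑ j, Q j j := by
    calc ∫ a, (∑ i, (b i + (Mm *ᵥ n a) i) ^ 2) ∂P
        = ∫ a, ((∑ i, (b i) ^ 2)
            + ((∑ j, c j * n a j) + ∑ j, ∑ k, Q j k * (n a j * n a k))) ∂P :=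
          integral_congr_ae (Filter.Eventually.of_forall fun a => expand (n a))
      _ = (∑ i, (b i) ^ 2) + ((∫ a, ∑ j, c j * n a j ∂P)
            + ∫ a, ∑ j, ∑ k, Q j k * (n a j * n a k) ∂P) := by
          have g0 : Integrable (fun a => ∑ j, c j * n a j) P :=
            integrable_finset_sum _ fun j _ => hintlin j
          have g1 : Integrable (fun a => ∑ j, ∑ k, Q j k * (n a j * n a k)) P :=
            integrable_finset_sum _ fun j _ => hsum2 j
          have g2 : Integrable
              (fun a => (∑ j, c j * n a j) + ∑ j, ∑ k, Q j k * (n a j * n a k)) P :=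
            g0.add g1
          rw [integral_add (integrable_const _) g2]
          congr 1
          · simp
          · exact integral_add g0 g1
      _ = (∑ i, (b i) ^ 2) + ω2 * ∑ j, Q j j := by rw [Ilin, Iquad, zero_add]
  -- bias term
  have hMmA : Mm * A = U * Matrix.diagonal (fun i => s i * σ i) * Uᵀ := by
    rw [hMm, Matrix.mul_assoc B Aᵀ A, hΨ, hBdef, hconj]
  have hG : Mm * A - 1 = U * Matrix.diagonal (fun i => s i * σ i - 1) * Uᵀ := by
    calc Mm * A - 1
        = U * Matrix.diagonal (fun i => s i * σ i) * Uᵀ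
          - U * Matrix.diagonal (fun _ => (1:ℝ)) * Uᵀ := by
          rw [hMmA, Matrix.diagonal_one, Matrix.mul_one, hUU]
      _ = U * (Matrix.diagonal (fun i => s i * σ i)
          - Matrix.diagonal (fun _ => (1:ℝ))) * Uᵀ := by
          rw [Matrix.mul_sub, Matrix.sub_mul]
      _ = U * Matrix.diagonal (fun i => s i * σ i - 1) * Uᵀ := by
          congr 1
          congr 1
          ext i j
          by_cases h : i = j <;> simp [Matrix.diagonal_apply, h]
  have hbform : b = (U * Matrix.diagonal (fun i => s i * σ i - 1) * Uᵀ) *ᵥ xt := by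
    rw [hb, ← hG, Matrix.sub_mulVec, Matrix.one_mulVec]
  have hbias : (∑ i, (b i) ^ 2) = ∑ i, ((1 + σ i / β) ^ 2)⁻¹ * ((Uᵀ *ᵥ xt) i) ^ 2 := by
    rw [hbform]
    have h4 : (U * Matrix.diagonal (fun i => s i * σ i - 1) * Uᵀ) *ᵥ xt
        = U *ᵥ (Matrix.diagonal (fun i => s i * σ i - 1) *ᵥ (Uᵀ *ᵥ xt)) := by
      simp [Matrix.mulVec_mulVec, Matrix.mul_assoc]
    rw [h4, hnormK U hU]
    refine Finset.sum_congr rfl fun i _ => ?_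
    rw [Matrix.mulVec_diagonal, mul_pow]
    congr 1
    have h5 := hσβ i
    have e : s i * σ i - 1 = -β / (σ i + β) := by
      rw [hs]
      field_simp
      ring
    have e2 : (1 + σ i / β) ^ 2 = (σ i + β) ^ 2 / β ^ 2 := by
      field_simp
      ring
    rw [e, div_pow, neg_sq, e2, inv_div]
  -- variance term
  have hBT : Bᵀ = B := by
    rw [hBdef]
    simp [Matrix.transpose_mul, Matrix.diagonal_transpose, Matrix.mul_assoc]
  have hMmT : Mmᵀ = A * B := by
    rw [hMm, Matrix.transpose_mul B Aᵀ, Matrix.transpose_transpose, hBT]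
  have hMMt : Mm * Mmᵀ = U * Matrix.diagonal (fun i => s i * σ i * s i) * Uᵀ := by
    rw [hMmT, hMm,
      show B * Aᵀ * (A * B) = B * (Aᵀ * A) * B from by simp only [Matrix.mul_assoc],
      hΨ, hBdef, hconj, hconj]
  have hvar : (∑ j, Q j j) = ∑ i, σ i / (σ i + β) ^ 2 := by
    have h2 : (∑ j, Q j j) = (Mm * Mmᵀ).trace := by
      simp only [hQ, Matrix.trace, Matrix.diag, Matrix.mul_apply, Matrix.transpose_apply]
      exact Finset.sum_comm
    rw [h2, hMMt, Matrix.mul_assoc, Matrix.trace_mul_comm U _, Matrix.mul_assoc, hU,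
      Matrix.mul_one, Matrix.trace_diagonal]
    refine Finset.sum_congr rfl fun i _ => ?_
    rw [hs, div_eq_mul_inv, pow_two, mul_inv]
    ring
  calc ∫ a, (∑ i, ((V *ᵥ ((Aᵀ * A + β • 1)⁻¹ *ᵥ
        (Aᵀ *ᵥ (C *ᵥ (V *ᵥ xt) + n a)))) i - (V *ᵥ xt) i) ^ 2) ∂P
      = ∫ a, (∑ i, (b i + (Mm *ᵥ n a) i) ^ 2) ∂P :=
        integral_congr_ae (Filter.Eventually.of_forall fun a => hinteg a)
    _ = (∑ i, (b i) ^ 2) + ω2 * ∑ j, Q j j := hI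
    _ = (∑ i, ((1 + σ i / β) ^ 2)⁻¹ * ((Uᵀ *ᵥ xt) i) ^ 2)
        + ω2 * ∑ i, σ i / (σ i + β) ^ 2 := by rw [hbias, hvar]
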